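/- Let m < −5/2, let a₁, a₂, a₃ ∈ S^m(ℝ) and a(η) = a₁(η₁)a₂(η₂)a₃(η₃), and let b : ℝ³ → ℂ be measurable and satisfy condition (⋆). Fix 0 < α < β and 0 < δ < min(1, α), and set μ = 1/(−m−1/2). For ξ ∈ ℝ and κ₂, κ₃ ∈ [α,β], let E₂(ξ,κ₂,κ₃) = A_{GGL}(ξ,κ₂,κ₃) ∩ {η ∈ ℝ³ : |η₁| ≤ |ξ|^μ, |η₂| ≤ |ξ|^μ}. Then for every ε > 0 there exist C > 0 and M > 1 such that for all ξ with |ξ| ≥ M and all κ₂, κ₃ ∈ [α,β]: | ∫_{E₂(ξ,κ₂,κ₃)} a(ξθ−η) b(η) dη | ≤ C |ξ|^{3m−1/2+μ+ε}. -/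

import Mathlib

open MeasureTheory

/-- The Japanese bracket `⟨t⟩ = (1+t²)^{1/2}`. -/
noncomputable def jb (t : ℝ) : ℝ := Real.sqrt (1 + t ^ 2)

/-- `⟨η⟩ = (1+|η|²)^{1/2}` for `η ∈ ℝ³`. -/
noncomputable def jb3 (η : Fin 3 → ℝ) : ℝ :=
  Real.sqrt (1 + (η 0) ^ 2 + (η 1) ^ 2 + (η 2) ^ 2)

/-- The symbol class `S^m(ℝ)`. -/
def SymbolClass (m : ℝ) (a : ℝ → ℂ) : Prop :=
  ContDiff ℝ (⊤ : ℕ∞) a ∧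
    ∀ k : ℕ, ∃ C : ℝ, 0 < C ∧ ∀ t : ℝ, ‖iteratedDeriv k a t‖ ≤ C * jb t ^ (m - (k : ℝ))

/-- `a(η) = a₁(η₁)a₂(η₂)a₃(η₃)`. -/
noncomputable def aprod (a₁ a₂ a₃ : ℝ → ℂ) (η : Fin 3 → ℝ) : ℂ :=
  a₁ (η 0) * a₂ (η 1) * a₃ (η 2)

/-- `ξθ = (ξ, κ₂ξ, κ₃ξ)`. -/
def xitheta (ξ κ₂ κ₃ : ℝ) : Fin 3 → ℝ := ![ξ, κ₂ * ξ, κ₃ * ξ]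

/-- Condition (⋆). -/
def StarCond (m : ℝ) (b : (Fin 3 → ℝ) → ℂ) : Prop :=
  ∀ ε : ℝ, 0 < ε →
    ∫⁻ η : Fin 3 → ℝ, ENNReal.ofReal
      (jb (η 0) ^ (-2 * m - 1) * jb (η 1) ^ (-2 * m - 1) * jb (η 2) ^ (-2 * m - 1) *
        jb3 η ^ (2 - 2 * ε) * ‖b η‖ ^ 2) < ⊤

/-- `A_{GGL}(ξ,κ₂,κ₃) = {η : |η₁−ξ| ≥ δ|ξ|, |η₂−κ₂ξ| ≥ δ|ξ|, |η₃−κ₃ξ| ≤ δ|ξ|}`. -/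
def A_GGL (δ ξ κ₂ κ₃ : ℝ) : Set (Fin 3 → ℝ) :=
  {η | δ * |ξ| ≤ |η 0 - ξ| ∧ δ * |ξ| ≤ |η 1 - κ₂ * ξ| ∧ |η 2 - κ₃ * ξ| ≤ δ * |ξ|}

/-- `E₂(ξ,κ₂,κ₃) = A_{GGL}(ξ,κ₂,κ₃) ∩ {η : |η₁| ≤ |ξ|^μ, |η₂| ≤ |ξ|^μ}`. -/
def E₂set (μ δ ξ κ₂ κ₃ : ℝ) : Set (Fin 3 → ℝ) :=
  A_GGL δ ξ κ₂ κ₃ ∩ {η | |η 0| ≤ |ξ| ^ μ ∧ |η 1| ≤ |ξ| ^ μ}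

open scoped ENNReal

/- ## auxiliary lemmas -/

lemma jb_pos (t : ℝ) : 0 < jb t := Real.sqrt_pos.2 (by positivity)
lemma one_le_jb (t : ℝ) : 1 ≤ jb t := by
  have h : Real.sqrt 1 ≤ Real.sqrt (1 + t ^ 2) := Real.sqrt_le_sqrt (by nlinarith)
  simpa [jb] using h
lemma abs_le_jb (t : ℝ) : |t| ≤ jb t := by
  have h : Real.sqrt (t ^ 2) ≤ Real.sqrt (1 + t ^ 2) := Real.sqrt_le_sqrt (by nlinarith)
  simpa [jb, Real.sqrt_sq_eq_abs] using h
lemma continuous_jb : Continuous jb := by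
  unfold jb; fun_prop
lemma continuous_jb3 : Continuous jb3 := by
  unfold jb3
  apply Real.continuous_sqrt.comp
  fun_prop
lemma jb_rpow_eq (t s : ℝ) : jb t ^ s = (1 + t ^ 2) ^ (s / 2) := by
  rw [jb, Real.sqrt_eq_rpow, ← Real.rpow_mul (by positivity)]
  ring_nf
lemma integrable_jb_rpow {s : ℝ} (hs : s < -1) : Integrable (fun t : ℝ => jb t ^ s) := by
  have h := integrable_rpow_neg_one_add_norm_sq (E := ℝ) (μ := volume) (r := -s) (by
    simp; linarith)
  simp only [Real.norm_eq_abs, sq_abs] at h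
  convert h using 2 with t
  rw [jb_rpow_eq]
  norm_num
lemma rpow_le_base {x c s : ℝ} (hc : 0 < c) (h : c ≤ x) (hs : s ≤ 0) : x ^ s ≤ c ^ s :=
  Real.rpow_le_rpow_of_nonpos hc h hs
lemma rpow_sq {x : ℝ} (hx : 0 ≤ x) (e : ℝ) : (x ^ e) ^ (2:ℕ) = x ^ (2*e) := by
  rw [← Real.rpow_natCast (x ^ e) 2, ← Real.rpow_mul hx]
  norm_num [mul_comm]
lemma jb3_pos (η : Fin 3 → ℝ) : 0 < jb3 η := Real.sqrt_pos.2 (by positivity)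
lemma jb_le_jb3 (η : Fin 3 → ℝ) : jb (η 2) ≤ jb3 η := by
  unfold jb jb3; exact Real.sqrt_le_sqrt (by nlinarith [sq_nonneg (η 0), sq_nonneg (η 1)])

lemma integrable_triple {g₁ g₂ g₃ : ℝ → ℝ} (h₁ : Integrable g₁) (h₂ : Integrable g₂)
    (h₃ : Integrable g₃) :
    Integrable (fun η : Fin 3 → ℝ => g₁ (η 0) * g₂ (η 1) * g₃ (η 2)) := by
  have := MeasureTheory.Integrable.fintype_prod (ι := Fin 3) (f := ![g₁, g₂, g₃]) (μ := fun _ => volume)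
    (by intro i; fin_cases i <;> simpa)
  simpa [Fin.prod_univ_three, ← MeasureTheory.volume_pi] using this

lemma integral_triple {g₁ g₂ g₃ : ℝ → ℝ} :
    ∫ η : Fin 3 → ℝ, g₁ (η 0) * g₂ (η 1) * g₃ (η 2)
      = (∫ t, g₁ t) * (∫ t, g₂ t) * (∫ t, g₃ t) := by
  have := MeasureTheory.integral_fintype_prod_eq_prod (ι := Fin 3) (f := ![g₁, g₂, g₃]) (μ := fun _ => volume)
  simpa [Fin.prod_univ_three, ← MeasureTheory.volume_pi] using this
set_option maxHeartbeats 1000000 in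
lemma key_pointwise (m ε' δ α ξ κ₂ κ₃ μp : ℝ) (a₁ a₂ a₃ : ℝ → ℂ) (C₁ C₂ C₃ : ℝ)
    (hm : m < -5/2) (hδ : 0 < δ) (hαδ : 0 < α - δ) (hξ : 0 < |ξ|)
    (hκ₃ : α ≤ κ₃) (hε'1 : ε' ≤ 1/2)
    (hC₁0 : 0 ≤ C₁) (hC₂0 : 0 ≤ C₂) (hC₃0 : 0 ≤ C₃)
    (hC₁ : ∀ t, ‖a₁ t‖ ≤ C₁ * jb t ^ m) (hC₂ : ∀ t, ‖a₂ t‖ ≤ C₂ * jb t ^ m)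
    (hC₃ : ∀ t, ‖a₃ t‖ ≤ C₃ * jb t ^ m)
    (η : Fin 3 → ℝ) (hη : η ∈ E₂set μp δ ξ κ₂ κ₃) :
    ‖aprod a₁ a₂ a₃ (xitheta ξ κ₂ κ₃ - η)‖ ^ 2 *
      (jb (η 0) ^ (-2*m-1) * jb (η 1) ^ (-2*m-1) * jb (η 2) ^ (-2*m-1)
        * jb3 η ^ (2-2*ε')) ^ (-(1:ℝ))
    ≤ (C₁^2 * C₂^2 * C₃^2 * δ^(2*m) * δ^(2*m) * (α-δ)^(2*m+1) * (α-δ)^(2*ε'-2))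
        * |ξ| ^ (6*m-1+2*ε')
        * (jb (η 0) ^ (2*m+1) * jb (η 1) ^ (2*m+1) * jb (κ₃*ξ - η 2) ^ (2*m)) := by
  obtain ⟨⟨hA1, hA2, hA3⟩, hB1, hB2⟩ := hη
  have hδξ : 0 < δ * |ξ| := by positivity
  have hαξ : 0 < (α - δ) * |ξ| := by positivity
  have e1 : (xitheta ξ κ₂ κ₃ - η) 0 = ξ - η 0 := by simp [xitheta]
  have e2 : (xitheta ξ κ₂ κ₃ - η) 1 = κ₂ * ξ - η 1 := by simp [xitheta]
  have e3 : (xitheta ξ κ₂ κ₃ - η) 2 = κ₃ * ξ - η 2 := by simp [xitheta]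
  have hm0 : m ≤ 0 := by linarith
  -- factor bounds
  have n1 : ‖a₁ (ξ - η 0)‖ ≤ C₁ * (δ * |ξ|) ^ m := by
    refine (hC₁ _).trans (mul_le_mul_of_nonneg_left ?_ hC₁0)
    exact rpow_le_base hδξ (le_trans (by rwa [abs_sub_comm] at hA1) (abs_le_jb _)) hm0
  have n2 : ‖a₂ (κ₂ * ξ - η 1)‖ ≤ C₂ * (δ * |ξ|) ^ m := by
    refine (hC₂ _).trans (mul_le_mul_of_nonneg_left ?_ hC₂0)
    exact rpow_le_base hδξ (le_trans (by rwa [abs_sub_comm] at hA2) (abs_le_jb _)) hm0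
  have n3 : ‖a₃ (κ₃ * ξ - η 2)‖ ≤ C₃ * jb (κ₃*ξ - η 2) ^ m := hC₃ _
  -- |η 2| is large
  have hη2 : (α - δ) * |ξ| ≤ jb (η 2) := by
    refine le_trans ?_ (abs_le_jb _)
    have h1 : |κ₃ * ξ| - |η 2 - κ₃ * ξ| ≤ |η 2| := by
      have := abs_sub_abs_le_abs_sub (κ₃ * ξ) (η 2)
      have h2 : |κ₃ * ξ - η 2| = |η 2 - κ₃ * ξ| := abs_sub_comm _ _
      linarith
    have h3 : |κ₃ * ξ| = κ₃ * |ξ| := by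
      rw [abs_mul, abs_of_nonneg (by linarith : (0:ℝ) ≤ κ₃)]
    nlinarith [abs_nonneg ξ]
  have p3 : jb (η 2) ^ (2*m+1) ≤ ((α-δ) * |ξ|) ^ (2*m+1) :=
    rpow_le_base hαξ hη2 (by linarith)
  have p4 : jb3 η ^ (2*ε'-2) ≤ ((α-δ) * |ξ|) ^ (2*ε'-2) :=
    rpow_le_base hαξ (le_trans hη2 (jb_le_jb3 η)) (by linarith)
  have hnorm : ‖aprod a₁ a₂ a₃ (xitheta ξ κ₂ κ₃ - η)‖ ^ 2
      = ‖a₁ (ξ - η 0)‖^2 * ‖a₂ (κ₂ * ξ - η 1)‖^2 * ‖a₃ (κ₃ * ξ - η 2)‖^2 := by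
    rw [aprod, e1, e2, e3, norm_mul, norm_mul]; ring
  have hW : (jb (η 0) ^ (-2*m-1) * jb (η 1) ^ (-2*m-1) * jb (η 2) ^ (-2*m-1)
        * jb3 η ^ (2-2*ε')) ^ (-(1:ℝ))
      = jb (η 0) ^ (2*m+1) * jb (η 1) ^ (2*m+1) * jb (η 2) ^ (2*m+1) * jb3 η ^ (2*ε'-2) := by
    have h1 : (2:ℝ)*m+1 = -(-2*m-1) := by ring
    have h2 : (2:ℝ)*ε'-2 = -(2-2*ε') := by ring
    rw [Real.rpow_neg_one, mul_inv, mul_inv, mul_inv, h1, h2,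
        Real.rpow_neg (jb_pos _).le, Real.rpow_neg (jb_pos _).le,
        Real.rpow_neg (jb_pos _).le, Real.rpow_neg (jb3_pos _).le]
  have q1 : (0:ℝ) ≤ jb (η 0) ^ (2*m+1) := Real.rpow_nonneg (jb_pos _).le _
  have q2 : (0:ℝ) ≤ jb (η 1) ^ (2*m+1) := Real.rpow_nonneg (jb_pos _).le _
  have q3 : (0:ℝ) ≤ jb (η 2) ^ (2*m+1) := Real.rpow_nonneg (jb_pos _).le _
  have q4 : (0:ℝ) ≤ jb3 η ^ (2*ε'-2) := Real.rpow_nonneg (jb3_pos _).le _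
  have qn3 : (0:ℝ) ≤ jb (κ₃*ξ - η 2) ^ m := Real.rpow_nonneg (jb_pos _).le _
  have hsq1 : (C₁ * (δ * |ξ|)^m)^2 = C₁^2 * (δ^(2*m) * |ξ|^(2*m)) := by
    rw [mul_pow, rpow_sq (by positivity), Real.mul_rpow hδ.le (abs_nonneg ξ)]
  have hsq2 : (C₂ * (δ * |ξ|)^m)^2 = C₂^2 * (δ^(2*m) * |ξ|^(2*m)) := by
    rw [mul_pow, rpow_sq (by positivity), Real.mul_rpow hδ.le (abs_nonneg ξ)]
  have hsq3 : (C₃ * jb (κ₃*ξ - η 2)^m)^2 = C₃^2 * jb (κ₃*ξ - η 2)^(2*m) := by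
    rw [mul_pow, rpow_sq (jb_pos _).le]
  have hsplit3 : ((α-δ)*|ξ|)^(2*m+1) = (α-δ)^(2*m+1) * |ξ|^(2*m+1) :=
    Real.mul_rpow hαδ.le (abs_nonneg ξ)
  have hsplit4 : ((α-δ)*|ξ|)^(2*ε'-2) = (α-δ)^(2*ε'-2) * |ξ|^(2*ε'-2) :=
    Real.mul_rpow hαδ.le (abs_nonneg ξ)
  have hXi : |ξ|^(2*m) * |ξ|^(2*m) * |ξ|^(2*m+1) * |ξ|^(2*ε'-2) = |ξ|^(6*m-1+2*ε') := by
    rw [← Real.rpow_add hξ, ← Real.rpow_add hξ, ← Real.rpow_add hξ]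
    ring_nf
  calc ‖aprod a₁ a₂ a₃ (xitheta ξ κ₂ κ₃ - η)‖ ^ 2 *
      (jb (η 0) ^ (-2*m-1) * jb (η 1) ^ (-2*m-1) * jb (η 2) ^ (-2*m-1)
        * jb3 η ^ (2-2*ε')) ^ (-(1:ℝ))
      = (‖a₁ (ξ - η 0)‖^2 * ‖a₂ (κ₂ * ξ - η 1)‖^2 * ‖a₃ (κ₃ * ξ - η 2)‖^2) *
        (jb (η 0) ^ (2*m+1) * jb (η 1) ^ (2*m+1) * jb (η 2) ^ (2*m+1) * jb3 η ^ (2*ε'-2)) := by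
        rw [hnorm, hW]
    _ ≤ ((C₁ * (δ * |ξ|)^m)^2 * (C₂ * (δ * |ξ|)^m)^2 * (C₃ * jb (κ₃*ξ - η 2)^m)^2) *
        (jb (η 0) ^ (2*m+1) * jb (η 1) ^ (2*m+1) * ((α-δ)*|ξ|)^(2*m+1)
          * ((α-δ)*|ξ|)^(2*ε'-2)) := by
        have qP12 : (0:ℝ) ≤ jb (η 0) ^ (2*m+1) * jb (η 1) ^ (2*m+1) := mul_nonneg q1 q2
        refine mul_le_mul
          (mul_le_mul (mul_le_mul (pow_le_pow_left₀ (norm_nonneg _) n1 2)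
              (pow_le_pow_left₀ (norm_nonneg _) n2 2) (by positivity) (by positivity))
            (pow_le_pow_left₀ (norm_nonneg _) n3 2) (by positivity) (by positivity))
          (mul_le_mul (mul_le_mul_of_nonneg_left p3 qP12) p4 q4
            (mul_nonneg qP12 (Real.rpow_nonneg hαξ.le _)))
          (mul_nonneg (mul_nonneg qP12 q3) q4) (by positivity)
    _ = (C₁^2 * C₂^2 * C₃^2 * δ^(2*m) * δ^(2*m) * (α-δ)^(2*m+1) * (α-δ)^(2*ε'-2))
        * (|ξ|^(2*m) * |ξ|^(2*m) * |ξ|^(2*m+1) * |ξ|^(2*ε'-2))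
        * (jb (η 0) ^ (2*m+1) * jb (η 1) ^ (2*m+1) * jb (κ₃*ξ - η 2) ^ (2*m)) := by
        rw [hsq1, hsq2, hsq3, hsplit3, hsplit4]; ring
    _ = _ := by rw [hXi]

set_option maxHeartbeats 2000000 in
theorem stmt13 (m : ℝ) (hm : m < -5 / 2) (a₁ a₂ a₃ : ℝ → ℂ)
    (h₁ : SymbolClass m a₁) (h₂ : SymbolClass m a₂) (h₃ : SymbolClass m a₃)
    (b : (Fin 3 → ℝ) → ℂ) (hb : Measurable b) (hstar : StarCond m b)
    (α β δ : ℝ) (hα : 0 < α) (hαβ : α < β) (hδ : 0 < δ) (hδ1 : δ < min 1 α)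
    (μ : ℝ) (hμ : μ = 1 / (-m - 1 / 2)) :
    ∀ ε : ℝ, 0 < ε →
      ∃ C M : ℝ, 0 < C ∧ 1 < M ∧
        ∀ ξ : ℝ, M ≤ |ξ| → ∀ κ₂ ∈ Set.Icc α β, ∀ κ₃ ∈ Set.Icc α β,
          ‖∫ η in E₂set μ δ ξ κ₂ κ₃, aprod a₁ a₂ a₃ (xitheta ξ κ₂ κ₃ - η) * b η‖
            ≤ C * |ξ| ^ (3 * m - 1 / 2 + μ + ε) := by
  intro ε hε
  set ε' : ℝ := min ε (1/2) with hε'def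
  have hε'pos : 0 < ε' := lt_min hε (by norm_num)
  have hε'ε : ε' ≤ ε := min_le_left _ _
  have hε'half : ε' ≤ 1/2 := min_le_right _ _
  have hμpos : 0 < μ := hμ ▸ div_pos one_pos (by linarith)
  have hαδ : 0 < α - δ := by
    rw [lt_min_iff] at hδ1; linarith [hδ1.2]
  -- symbol constants
  obtain ⟨C₁, hC₁pos, hC₁d⟩ := h₁.2 0
  obtain ⟨C₂, hC₂pos, hC₂d⟩ := h₂.2 0
  obtain ⟨C₃, hC₃pos, hC₃d⟩ := h₃.2 0
  have hC₁ : ∀ t, ‖a₁ t‖ ≤ C₁ * jb t ^ m := fun t => by simpa using hC₁d t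
  have hC₂ : ∀ t, ‖a₂ t‖ ≤ C₂ * jb t ^ m := fun t => by simpa using hC₂d t
  have hC₃ : ∀ t, ‖a₃ t‖ ≤ C₃ * jb t ^ m := fun t => by simpa using hC₃d t
  -- one-dimensional integrals
  set I₁ : ℝ := ∫ t : ℝ, jb t ^ (2*m+1) with hI₁def
  set J : ℝ := ∫ t : ℝ, jb t ^ (2*m) with hJdef
  have hI₁int : Integrable (fun t : ℝ => jb t ^ (2*m+1)) := integrable_jb_rpow (by linarith)
  have hJint : Integrable (fun t : ℝ => jb t ^ (2*m)) := integrable_jb_rpow (by linarith)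
  have hI₁0 : 0 ≤ I₁ := integral_nonneg fun t => Real.rpow_nonneg (jb_pos t).le _
  have hJ0 : 0 ≤ J := integral_nonneg fun t => Real.rpow_nonneg (jb_pos t).le _
  -- the star integral
  set B : ℝ≥0∞ := ∫⁻ η : Fin 3 → ℝ, ENNReal.ofReal
      (jb (η 0) ^ (-2 * m - 1) * jb (η 1) ^ (-2 * m - 1) * jb (η 2) ^ (-2 * m - 1) *
        jb3 η ^ (2 - 2 * ε') * ‖b η‖ ^ 2) with hBdef
  have hBlt : B < ⊤ := hstar ε' hε'pos
  -- the constant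
  set D : ℝ := C₁^2 * C₂^2 * C₃^2 * δ^(2*m) * δ^(2*m) * (α-δ)^(2*m+1) * (α-δ)^(2*ε'-2)
    with hDdef
  have hD0 : 0 ≤ D := by
    have r1 : (0:ℝ) ≤ δ^(2*m) := Real.rpow_nonneg hδ.le _
    have r2 : (0:ℝ) ≤ (α-δ)^(2*m+1) := Real.rpow_nonneg hαδ.le _
    have r3 : (0:ℝ) ≤ (α-δ)^(2*ε'-2) := Real.rpow_nonneg hαδ.le _
    positivity
  set c₀ : ℝ := (D * (I₁ * I₁ * J)) ^ ((1:ℝ)/2) * B.toReal ^ ((1:ℝ)/2) with hc₀def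
  have hc₀0 : 0 ≤ c₀ :=
    mul_nonneg (Real.rpow_nonneg (by positivity) _) (Real.rpow_nonneg ENNReal.toReal_nonneg _)
  refine ⟨c₀ + 1, 2, by linarith, by norm_num, ?_⟩
  intro ξ hξM κ₂ hκ₂ κ₃ hκ₃
  have hξ1 : (1:ℝ) ≤ |ξ| := by linarith
  have hξ0 : (0:ℝ) < |ξ| := by linarith
  set s : Set (Fin 3 → ℝ) := E₂set μ δ ξ κ₂ κ₃ with hsdef
  set v : Fin 3 → ℝ := xitheta ξ κ₂ κ₃ with hvdef
  set W : (Fin 3 → ℝ) → ℝ := fun η => jb (η 0) ^ (-2*m-1) * jb (η 1) ^ (-2*m-1)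
    * jb (η 2) ^ (-2*m-1) * jb3 η ^ (2-2*ε') with hWdef
  have hWpos : ∀ η, 0 < W η := fun η =>
    mul_pos (mul_pos (mul_pos (Real.rpow_pos_of_pos (jb_pos _) _)
      (Real.rpow_pos_of_pos (jb_pos _) _)) (Real.rpow_pos_of_pos (jb_pos _) _))
      (Real.rpow_pos_of_pos (jb3_pos _) _)
  set U : (Fin 3 → ℝ) → ℝ≥0∞ :=
    fun η => ENNReal.ofReal (‖aprod a₁ a₂ a₃ (v - η)‖ * W η ^ (-(1:ℝ)/2)) with hUdef
  set V : (Fin 3 → ℝ) → ℝ≥0∞ :=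
    fun η => ENNReal.ofReal (W η ^ ((1:ℝ)/2) * ‖b η‖) with hVdef
  have hfactor : ∀ η, ENNReal.ofReal ‖aprod a₁ a₂ a₃ (v - η) * b η‖ = U η * V η := by
    intro η
    rw [hUdef, hVdef, ← ENNReal.ofReal_mul
      (mul_nonneg (norm_nonneg _) (Real.rpow_nonneg (hWpos η).le _))]
    congr 1
    have h1 : W η ^ (-(1:ℝ)/2) * W η ^ ((1:ℝ)/2) = 1 := by
      rw [← Real.rpow_add (hWpos η)]; norm_num
    rw [norm_mul, show ‖aprod a₁ a₂ a₃ (v - η)‖ * W η ^ (-(1:ℝ)/2) * (W η ^ ((1:ℝ)/2) * ‖b η‖)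
      = (W η ^ (-(1:ℝ)/2) * W η ^ ((1:ℝ)/2)) * (‖aprod a₁ a₂ a₃ (v - η)‖ * ‖b η‖) by ring,
      h1, one_mul]
  -- measurability
  have hacont : Continuous (fun η : Fin 3 → ℝ => aprod a₁ a₂ a₃ (v - η)) := by
    have : (fun η : Fin 3 → ℝ => aprod a₁ a₂ a₃ (v - η))
        = fun η => a₁ (v 0 - η 0) * a₂ (v 1 - η 1) * a₃ (v 2 - η 2) := rfl
    rw [this]
    exact ((h₁.1.continuous.comp (continuous_const.sub (continuous_apply 0))).mul
      (h₂.1.continuous.comp (continuous_const.sub (continuous_apply 1)))).mul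
      (h₃.1.continuous.comp (continuous_const.sub (continuous_apply 2)))
  have hWcont : Continuous W := by
    rw [hWdef]
    refine (((((continuous_jb.comp (continuous_apply 0)).rpow_const
        (fun η => Or.inl (jb_pos _).ne')).mul
      ((continuous_jb.comp (continuous_apply 1)).rpow_const
        (fun η => Or.inl (jb_pos _).ne'))).mul
      ((continuous_jb.comp (continuous_apply 2)).rpow_const
        (fun η => Or.inl (jb_pos _).ne'))).mul
      (continuous_jb3.rpow_const (fun η => Or.inl (jb3_pos _).ne')))
  have hUmeas : Measurable U := by
    rw [hUdef]
    exact ENNReal.measurable_ofReal.comp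
      ((hacont.norm.mul (hWcont.rpow_const (fun η => Or.inl (hWpos _).ne'))).measurable)
  have hVmeas : Measurable V := by
    rw [hVdef]
    exact ENNReal.measurable_ofReal.comp
      (((hWcont.rpow_const (fun η => Or.inl (hWpos _).ne')).measurable).mul hb.norm)
  -- Hölder
  have hconj : Real.HolderConjugate 2 2 := Real.HolderConjugate.two_two
  have holder := ENNReal.lintegral_mul_le_Lp_mul_Lq (volume.restrict s) hconj
    hUmeas.aemeasurable hVmeas.aemeasurable
  -- the V factor
  have hVsq : ∀ η, V η ^ (2:ℝ) = ENNReal.ofReal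
      (jb (η 0) ^ (-2 * m - 1) * jb (η 1) ^ (-2 * m - 1) * jb (η 2) ^ (-2 * m - 1) *
        jb3 η ^ (2 - 2 * ε') * ‖b η‖ ^ 2) := by
    intro η
    rw [hVdef, ENNReal.ofReal_rpow_of_nonneg
      (mul_nonneg (Real.rpow_nonneg (hWpos η).le _) (norm_nonneg _)) (by norm_num)]
    congr 1
    rw [show ((2:ℝ)) = ((2:ℕ):ℝ) by norm_num, Real.rpow_natCast, mul_pow,
      rpow_sq (hWpos η).le]
    rw [hWdef]
    norm_num [Real.rpow_one]
  have hVbound : (∫⁻ η in s, V η ^ (2:ℝ)) ≤ B := by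
    refine le_trans (lintegral_mono' Measure.restrict_le_self le_rfl) ?_
    rw [hBdef]
    refine le_of_eq (lintegral_congr fun η => hVsq η)
  -- the U factor
  have hUsq : ∀ η, U η ^ (2:ℝ) = ENNReal.ofReal
      (‖aprod a₁ a₂ a₃ (v - η)‖^2 * W η ^ (-(1:ℝ))) := by
    intro η
    rw [hUdef, ENNReal.ofReal_rpow_of_nonneg
      (mul_nonneg (norm_nonneg _) (Real.rpow_nonneg (hWpos η).le _)) (by norm_num)]
    congr 1
    rw [show ((2:ℝ)) = ((2:ℕ):ℝ) by norm_num, Real.rpow_natCast, mul_pow,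
      rpow_sq (hWpos η).le]
    norm_num
  set G : (Fin 3 → ℝ) → ℝ :=
    fun η => jb (η 0) ^ (2*m+1) * jb (η 1) ^ (2*m+1) * jb (κ₃*ξ - η 2) ^ (2*m) with hGdef
  have hG0 : ∀ η, 0 ≤ G η := fun η =>
    mul_nonneg (mul_nonneg (Real.rpow_nonneg (jb_pos _).le _)
      (Real.rpow_nonneg (jb_pos _).le _)) (Real.rpow_nonneg (jb_pos _).le _)
  have hGint : Integrable G :=
    integrable_triple hI₁int hI₁int (hJint.comp_sub_left (κ₃*ξ))
  have h3 : (∫ t : ℝ, jb (κ₃*ξ - t) ^ (2*m)) = J :=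
    integral_sub_left_eq_self (fun u : ℝ => jb u ^ (2*m)) volume (κ₃*ξ)
  have hGval : ∫ η, G η = I₁ * I₁ * J := by
    have h := integral_triple (g₁ := fun t : ℝ => jb t ^ (2*m+1))
      (g₂ := fun t : ℝ => jb t ^ (2*m+1)) (g₃ := fun t : ℝ => jb (κ₃*ξ - t) ^ (2*m))
    rw [h3] at h
    rw [hGdef]
    exact h
  have hGcont : Continuous G := by
    rw [hGdef]
    exact (((continuous_jb.comp (continuous_apply 0)).rpow_const
        (fun η => Or.inl (jb_pos _).ne')).mul
      ((continuous_jb.comp (continuous_apply 1)).rpow_const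
        (fun η => Or.inl (jb_pos _).ne'))).mul
      ((continuous_jb.comp (continuous_const.sub (continuous_apply 2))).rpow_const
        (fun η => Or.inl (jb_pos _).ne'))
  have hkey : ∀ η ∈ s, U η ^ (2:ℝ) ≤
      ENNReal.ofReal (D * |ξ| ^ (6*m-1+2*ε') * G η) := by
    intro η hη
    rw [hUsq η]
    refine ENNReal.ofReal_le_ofReal ?_
    have := key_pointwise m ε' δ α ξ κ₂ κ₃ μ a₁ a₂ a₃ C₁ C₂ C₃ hm hδ hαδ hξ0
      hκ₃.1 hε'half hC₁pos.le hC₂pos.le hC₃pos.le hC₁ hC₂ hC₃ η hη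
    rw [hWdef, hGdef, hDdef]
    exact this
  have hUbound : (∫⁻ η in s, U η ^ (2:ℝ))
      ≤ ENNReal.ofReal (D * |ξ| ^ (6*m-1+2*ε')) * ENNReal.ofReal (I₁ * I₁ * J) := by
    have hc0 : 0 ≤ D * |ξ| ^ (6*m-1+2*ε') :=
      mul_nonneg hD0 (Real.rpow_nonneg (abs_nonneg ξ) _)
    calc (∫⁻ η in s, U η ^ (2:ℝ))
        ≤ ∫⁻ η in s, ENNReal.ofReal (D * |ξ| ^ (6*m-1+2*ε') * G η) :=
          setLIntegral_mono (ENNReal.measurable_ofReal.comp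
            ((continuous_const.mul hGcont).measurable)) hkey
      _ ≤ ∫⁻ η, ENNReal.ofReal (D * |ξ| ^ (6*m-1+2*ε') * G η) :=
          lintegral_mono' Measure.restrict_le_self le_rfl
      _ = ENNReal.ofReal (D * |ξ| ^ (6*m-1+2*ε')) * ∫⁻ η, ENNReal.ofReal (G η) := by
          simp_rw [ENNReal.ofReal_mul hc0]
          rw [lintegral_const_mul' _ _ ENNReal.ofReal_ne_top]
      _ = ENNReal.ofReal (D * |ξ| ^ (6*m-1+2*ε')) * ENNReal.ofReal (I₁ * I₁ * J) := by
          rw [← ofReal_integral_eq_lintegral_ofReal hGint (ae_of_all _ hG0), hGval]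
  -- combine
  set P : ℝ := D * (I₁ * I₁ * J) * |ξ| ^ (6*m-1+2*ε') with hPdef
  have hP0 : 0 ≤ P := by
    have := Real.rpow_nonneg (abs_nonneg ξ) (6*m-1+2*ε')
    positivity
  have main : (∫⁻ η in s, ENNReal.ofReal ‖aprod a₁ a₂ a₃ (v - η) * b η‖)
      ≤ (ENNReal.ofReal P) ^ ((1:ℝ)/2) * B ^ ((1:ℝ)/2) := by
    calc (∫⁻ η in s, ENNReal.ofReal ‖aprod a₁ a₂ a₃ (v - η) * b η‖)
        = ∫⁻ η in s, (U * V) η := by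
          refine lintegral_congr fun η => ?_
          rw [Pi.mul_apply, hfactor η]
      _ ≤ (∫⁻ η in s, U η ^ (2:ℝ)) ^ ((1:ℝ)/2) * (∫⁻ η in s, V η ^ (2:ℝ)) ^ ((1:ℝ)/2) :=
          holder
      _ ≤ (ENNReal.ofReal (D * |ξ| ^ (6*m-1+2*ε')) * ENNReal.ofReal (I₁ * I₁ * J)) ^ ((1:ℝ)/2)
            * B ^ ((1:ℝ)/2) := by
          exact mul_le_mul' (ENNReal.rpow_le_rpow hUbound (by norm_num))
            (ENNReal.rpow_le_rpow hVbound (by norm_num))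
      _ = (ENNReal.ofReal P) ^ ((1:ℝ)/2) * B ^ ((1:ℝ)/2) := by
          rw [← ENNReal.ofReal_mul (mul_nonneg hD0 (Real.rpow_nonneg (abs_nonneg ξ) _)), hPdef]
          congr 2
          ring
  have hRfin : (ENNReal.ofReal P) ^ ((1:ℝ)/2) * B ^ ((1:ℝ)/2) ≠ ⊤ :=
    ENNReal.mul_ne_top
      (ENNReal.rpow_ne_top_of_nonneg (by norm_num) ENNReal.ofReal_ne_top)
      (ENNReal.rpow_ne_top_of_nonneg (by norm_num) hBlt.ne)
  have hnormle : ‖∫ η in s, aprod a₁ a₂ a₃ (v - η) * b η‖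
      ≤ ((ENNReal.ofReal P) ^ ((1:ℝ)/2) * B ^ ((1:ℝ)/2)).toReal := by
    refine le_trans (norm_integral_le_lintegral_norm _) ?_
    exact ENNReal.toReal_mono hRfin main
  have htoReal : ((ENNReal.ofReal P) ^ ((1:ℝ)/2) * B ^ ((1:ℝ)/2)).toReal
      = P ^ ((1:ℝ)/2) * B.toReal ^ ((1:ℝ)/2) := by
    rw [ENNReal.toReal_mul, ← ENNReal.toReal_rpow, ← ENNReal.toReal_rpow,
      ENNReal.toReal_ofReal hP0]
  have hPsplit : P ^ ((1:ℝ)/2)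
      = (D * (I₁ * I₁ * J)) ^ ((1:ℝ)/2) * |ξ| ^ (3*m-1/2+ε') := by
    rw [hPdef, Real.mul_rpow (by positivity) (Real.rpow_nonneg (abs_nonneg ξ) _),
      ← Real.rpow_mul (abs_nonneg ξ)]
    congr 1
    ring
  calc ‖∫ η in E₂set μ δ ξ κ₂ κ₃, aprod a₁ a₂ a₃ (xitheta ξ κ₂ κ₃ - η) * b η‖
      ≤ P ^ ((1:ℝ)/2) * B.toReal ^ ((1:ℝ)/2) := by rw [← htoReal]; exact hnormle
    _ = c₀ * |ξ| ^ (3*m-1/2+ε') := by rw [hPsplit, hc₀def]; ring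
    _ ≤ (c₀ + 1) * |ξ| ^ (3 * m - 1 / 2 + μ + ε) := by
        refine mul_le_mul (by linarith) ?_ (Real.rpow_nonneg (abs_nonneg ξ) _) (by linarith)
        exact Real.rpow_le_rpow_of_exponent_le hξ1 (by linarith)
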